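/- Let a, b ∈ ℂ with |a| + |b| < 1. Define μ = −2a / (1 + |a|² − |b|² + √((1 + |a|² − |b|²)² − 4|a|²)) and ν = −2b / (1 + |b|² − |a|² + √((1 + |b|² − |a|²)² − 4|b|²)) (the square roots are real and well defined since the radicands are nonnegative when |a| + |b| < 1). Then |μ| < 1 and |ν| < 1. -/

import Mathlib

open Complex

private lemma aux_key (x y : ℝ) (hx : 0 ≤ x) (hy : 0 ≤ y) (hxy : x + y < 1) :
    2 * x < 1 + x ^ 2 - y ^ 2 + Real.sqrt ((1 + x ^ 2 - y ^ 2) ^ 2 - 4 * x ^ 2) := by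
  have h1 : 2 * x < 1 + x ^ 2 - y ^ 2 := by nlinarith [sq_nonneg (1 - x - y), sq_nonneg (1 - x + y)]
  have := Real.sqrt_nonneg ((1 + x ^ 2 - y ^ 2) ^ 2 - 4 * x ^ 2)
  linarith

private lemma aux_half (a b : ℂ) (hab : ‖a‖ + ‖b‖ < 1) :
    ‖-2 * a /
        (((1 + ‖a‖ ^ 2 - ‖b‖ ^ 2 +
          Real.sqrt ((1 + ‖a‖ ^ 2 - ‖b‖ ^ 2) ^ 2
            - 4 * ‖a‖ ^ 2) : ℝ) : ℂ))‖ < 1 := by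
  set x := ‖a‖ with hx
  set y := ‖b‖ with hy
  have hkey := aux_key x y (norm_nonneg a) (norm_nonneg b) hab
  set D : ℝ := 1 + x ^ 2 - y ^ 2 + Real.sqrt ((1 + x ^ 2 - y ^ 2) ^ 2 - 4 * x ^ 2) with hD
  have hDpos : 0 < D := lt_of_le_of_lt (by positivity) hkey
  have habs : ‖-2 * a / (D : ℂ)‖ = 2 * x / D := by
    rw [norm_div, norm_mul, Complex.norm_real, Real.norm_eq_abs, abs_of_pos hDpos]
    simp [hx]
  rw [habs, div_lt_one hDpos]
  linarith

/-- **Bounds on the change-of-variables constants.** For `|a| + |b| < 1`, the constants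
`μ = −2a / (1 + |a|² − |b|² + √((1 + |a|² − |b|²)² − 4|a|²))` and
`ν = −2b / (1 + |b|² − |a|² + √((1 + |b|² − |a|²)² − 4|b|²))` satisfy `|μ| < 1`, `|ν| < 1`. -/
theorem change_of_variables_constants_lt_one
    (a b : ℂ) (hab : ‖a‖ + ‖b‖ < 1) :
    ‖-2 * a /
        (((1 + ‖a‖ ^ 2 - ‖b‖ ^ 2 +
          Real.sqrt ((1 + ‖a‖ ^ 2 - ‖b‖ ^ 2) ^ 2
            - 4 * ‖a‖ ^ 2) : ℝ) : ℂ))‖ < 1 ∧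
    ‖-2 * b /
        (((1 + ‖b‖ ^ 2 - ‖a‖ ^ 2 +
          Real.sqrt ((1 + ‖b‖ ^ 2 - ‖a‖ ^ 2) ^ 2
            - 4 * ‖b‖ ^ 2) : ℝ) : ℂ))‖ < 1 :=
  ⟨aux_half a b hab, aux_half b a (by linarith)⟩
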